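/- arXiv:2502.16233 — 2 statements merged into one kernel-verified Lean document; each statement's English description precedes it below -/
import Mathlib

section
/- Let W be a countable set and let ψ : W → ℕ be an injection. Fix N ∈ ℕ and a natural number P > N. Then the function mapping each multiset S over W of cardinality less than N to the sum over s ∈ S of P^{-ψ(s)} (as a rational number) is injective on the set of such multisets. -/
private def pinv (P : ℕ) : ℕ → ℚ := fun a => (1 : ℚ) / (P : ℚ) ^ a

private lemma aux_sum_lt {P : ℕ} (hP2 : 1 < P) (m : ℕ) (B : Multiset ℕ)
    (hB : B.card < P) (hb : ∀ b ∈ B, m < b) :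
    (B.map (pinv P)).sum < pinv P m := by
  have hPpos : (0:ℚ) < P := by exact_mod_cast Nat.lt_of_lt_of_le Nat.zero_lt_one hP2.le
  have hbound : ∀ x ∈ B.map (pinv P), x ≤ (1:ℚ)/(P:ℚ)^(m+1) := by
    intro x hx
    obtain ⟨a, ha, rfl⟩ := Multiset.mem_map.mp hx
    apply one_div_le_one_div_of_le (by positivity)
    exact pow_le_pow_right₀ (by exact_mod_cast hP2.le) (hb a ha)
  calc (B.map (pinv P)).sum ≤ (B.map (pinv P)).card • ((1:ℚ)/(P:ℚ)^(m+1)) :=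
        Multiset.sum_le_card_nsmul _ _ hbound
    _ = B.card * ((1:ℚ)/(P:ℚ)^(m+1)) := by simp [nsmul_eq_mul]
    _ < P * ((1:ℚ)/(P:ℚ)^(m+1)) := by
        apply mul_lt_mul_of_pos_right _ (by positivity)
        exact_mod_cast hB
    _ = pinv P m := by
        unfold pinv
        rw [pow_succ]
        field_simp

private lemma ge_of_mem {P : ℕ} (hP2 : 1 < P) (m : ℕ) (A : Multiset ℕ) (hm : m ∈ A) :
    pinv P m ≤ (A.map (pinv P)).sum := by
  have hPpos : (0:ℚ) < P := by exact_mod_cast Nat.lt_of_lt_of_le Nat.zero_lt_one hP2.le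
  apply Multiset.single_le_sum
  · intro x hx
    obtain ⟨a, ha, rfl⟩ := Multiset.mem_map.mp hx
    unfold pinv; positivity
  · exact Multiset.mem_map_of_mem _ hm

private lemma disjoint_case {P : ℕ} (hP2 : 1 < P) (A B : Multiset ℕ)
    (hA : A.card < P) (hB : B.card < P)
    (hdisj : ∀ x, x ∈ A → x ∉ B)
    (hsum : (A.map (pinv P)).sum = (B.map (pinv P)).sum) : A = 0 ∧ B = 0 := by
  by_contra h
  have hne : A + B ≠ 0 := by
    intro h0
    simp only [add_eq_zero] at h0
    exact h h0
  have hfs : (A + B).toFinset.Nonempty := by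
    rw [Multiset.toFinset_nonempty]
    exact fun h0 => hne h0
  set m := (A + B).toFinset.min' hfs with hm
  have hmmem : m ∈ A + B := Multiset.mem_toFinset.mp ((A + B).toFinset.min'_mem hfs)
  have hmin : ∀ x ∈ A + B, m ≤ x := fun x hx =>
    Finset.min'_le _ x (Multiset.mem_toFinset.mpr hx)
  rcases Multiset.mem_add.mp hmmem with hmA | hmB
  · have hlt : ∀ b ∈ B, m < b := by
      intro b hb
      have := hmin b (Multiset.mem_add.mpr (Or.inr hb))
      rcases this.lt_or_eq with h1 | h1
      · exact h1
      · exact absurd hb (h1 ▸ hdisj m hmA)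
    have := (ge_of_mem hP2 m A hmA).trans_lt (hsum ▸ aux_sum_lt hP2 m B hB hlt)
    exact lt_irrefl _ this
  · have hlt : ∀ a ∈ A, m < a := by
      intro a ha
      have := hmin a (Multiset.mem_add.mpr (Or.inl ha))
      rcases this.lt_or_eq with h1 | h1
      · exact h1
      · exact absurd hmB (h1 ▸ hdisj a ha)
    have := (ge_of_mem hP2 m B hmB).trans_lt (hsum ▸ aux_sum_lt hP2 m A hA hlt)
    exact lt_irrefl _ this

private lemma nat_multiset_case {P : ℕ} (hP2 : 1 < P) (A B : Multiset ℕ)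
    (hA : A.card < P) (hB : B.card < P)
    (hsum : (A.map (pinv P)).sum = (B.map (pinv P)).sum) : A = B := by
  have hAdec : A = (A - B) + (A ∩ B) := by
    rw [Multiset.sub_add_inter]
  have hBdec : B = (B - A) + (B ∩ A) := by
    rw [Multiset.sub_add_inter]
  have hsum' : ((A - B).map (pinv P)).sum = ((B - A).map (pinv P)).sum := by
    have h1 : (A.map (pinv P)).sum
        = ((A - B).map (pinv P)).sum + ((A ∩ B).map (pinv P)).sum := by
      conv_lhs => rw [hAdec]
      rw [Multiset.map_add, Multiset.sum_add]
    have h2 : (B.map (pinv P)).sum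
        = ((B - A).map (pinv P)).sum + ((B ∩ A).map (pinv P)).sum := by
      conv_lhs => rw [hBdec]
      rw [Multiset.map_add, Multiset.sum_add]
    rw [h1, h2, Multiset.inter_comm] at hsum
    exact add_right_cancel hsum
  have hdisj : ∀ x, x ∈ A - B → x ∉ B - A := by
    intro x hx hx'
    rw [← Multiset.count_pos, Multiset.count_sub] at hx hx'
    omega
  have hcardA : (A - B).card < P := lt_of_le_of_lt (Multiset.card_le_card (Multiset.sub_le_self A B)) hA
  have hcardB : (B - A).card < P := lt_of_le_of_lt (Multiset.card_le_card (Multiset.sub_le_self B A)) hB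
  obtain ⟨h1, h2⟩ := disjoint_case hP2 _ _ hcardA hcardB hdisj hsum'
  have hAB : A ≤ B := tsub_eq_zero_iff_le.mp h1
  have hBA : B ≤ A := tsub_eq_zero_iff_le.mp h2
  exact le_antisymm hAB hBA

/-- Let `W` be a countable set, `ψ : W → ℕ` an injection, and `P > N` natural numbers.
Then the map sending a multiset `S` over `W` of cardinality less than `N` to
`Σ_{s ∈ S} P^{-ψ(s)} ∈ ℚ` is injective on such multisets. -/
theorem multiset_inv_prime_pow_sum_injective
    {W : Type*} [Countable W] (ψ : W → ℕ) (hψ : Function.Injective ψ)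
    (N P : ℕ) (hP : P > N)
    (S S' : Multiset W) (hS : S.card < N) (hS' : S'.card < N)
    (hsum : (S.map (fun s => (1 : ℚ) / (P : ℚ) ^ (ψ s))).sum
          = (S'.map (fun s => (1 : ℚ) / (P : ℚ) ^ (ψ s))).sum) :
    S = S' := by
  have hP2 : 1 < P := by omega
  have hsum' : ((S.map ψ).map (pinv P)).sum = ((S'.map ψ).map (pinv P)).sum := by
    simpa [Multiset.map_map, pinv, Function.comp_def] using hsum
  have hA : (S.map ψ).card < P := by
    rw [Multiset.card_map]; omega
  have hB : (S'.map ψ).card < P := by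
    rw [Multiset.card_map]; omega
  have := nat_multiset_case hP2 _ _ hA hB hsum'
  exact Multiset.map_injective hψ this
end

section
/- Let ψ₁ : W₁ → {odd naturals} and ψ₂ : W₂ → {even naturals} be injections into the odd and even natural numbers respectively, let P be a prime, and define f₁(w) = P^{-ψ₁(w)}, f₂(w) = P^{-ψ₂(w)}. If S₁, S₁' are multisets over W₁ and S₂, S₂' are multisets over W₂, all of cardinality less than N where P > 3N, and Σ_{w∈S₁} f₁(w) + Σ_{w∈S₂} f₂(w) = Σ_{w∈S₁'} f₁(w) + Σ_{w∈S₂'} f₂(w), then S₁ = S₁' and S₂ = S₂'. -/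
private lemma digit_unique (P : ℕ) (hP : 2 ≤ P) :
    ∀ n (T T' : Multiset ℕ), T.card ≤ n → T.card < P → T'.card < P →
      (T.map (fun k => (1 : ℚ) / (P : ℚ) ^ k)).sum
        = (T'.map (fun k => (1 : ℚ) / (P : ℚ) ^ k)).sum → T = T' := by
  have hP0 : (0 : ℚ) < P := by exact_mod_cast Nat.lt_of_lt_of_le Nat.zero_lt_two hP
  have hgpos : ∀ k : ℕ, (0 : ℚ) < 1 / (P : ℚ) ^ k := fun k => by positivity
  have hsumpos : ∀ T : Multiset ℕ, T ≠ 0 →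
      0 < (T.map (fun k => (1 : ℚ) / (P : ℚ) ^ k)).sum := by
    intro T hT
    obtain ⟨a, ha⟩ := Multiset.exists_mem_of_ne_zero hT
    refine lt_of_lt_of_le (hgpos a) (Multiset.single_le_sum ?_ _ ?_)
    · intro x hx
      obtain ⟨k, _, rfl⟩ := Multiset.mem_map.1 hx
      exact le_of_lt (hgpos k)
    · exact Multiset.mem_map_of_mem _ ha
  intro n
  induction n with
  | zero =>
    intro T T' hTn _ _ hsum
    have hT : T = 0 := Multiset.card_eq_zero.1 (Nat.le_zero.1 hTn)
    subst hT
    by_contra h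
    have h2 := hsumpos T' (fun hh => h hh.symm)
    rw [← hsum] at h2
    simp at h2
  | succ n ih =>
    intro T T' hTn hTP hT'P hsum
    -- if T = 0 then T' = 0 as above
    rcases eq_or_ne T 0 with rfl | hT0
    · by_contra h
      have h2 := hsumpos T' (fun hh => h hh.symm)
      rw [← hsum] at h2
      simp at h2
    have hT'0 : T' ≠ 0 := by
      rintro rfl
      have h2 := hsumpos T hT0
      rw [hsum] at h2
      simp at h2
    -- the minimal exponent
    have hne : (T + T').toFinset.Nonempty := by
      obtain ⟨a, ha⟩ := Multiset.exists_mem_of_ne_zero hT0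
      exact ⟨a, Multiset.mem_toFinset.2 (Multiset.mem_add.2 (Or.inl ha))⟩
    set m := (T + T').toFinset.min' hne with hm
    have hmin : ∀ k ∈ T + T', m ≤ k := fun k hk =>
      Finset.min'_le _ _ (Multiset.mem_toFinset.2 hk)
    have hmmem : m ∈ T + T' := Multiset.mem_toFinset.1 ((T + T').toFinset.min'_mem hne)
    set g : ℕ → ℚ := fun k => (1 : ℚ) / (P : ℚ) ^ k with hg
    set c := T.count m with hc
    set c' := T'.count m with hc'
    set F := T.filter (fun a => ¬ a = m) with hF
    set F' := T'.filter (fun a => ¬ a = m) with hF'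
    have hsplit : Multiset.replicate c m + F = T := by
      rw [hF, hc, ← Multiset.filter_eq']
      exact Multiset.filter_add_not _ _
    have hsplit' : Multiset.replicate c' m + F' = T' := by
      rw [hF', hc', ← Multiset.filter_eq']
      exact Multiset.filter_add_not _ _
    -- decompose sums
    have hdecomp : ∀ (S : Multiset ℕ) (d : ℕ) (G : Multiset ℕ),
        Multiset.replicate d m + G = S →
        (S.map g).sum = d * g m + (G.map g).sum := by
      intro S d G hSG
      rw [← hSG, Multiset.map_add, Multiset.sum_add, Multiset.map_replicate,
        Multiset.sum_replicate, nsmul_eq_mul]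
    have hd : (T.map g).sum = c * g m + (F.map g).sum := hdecomp T c F hsplit
    have hd' : (T'.map g).sum = c' * g m + (F'.map g).sum := hdecomp T' c' F' hsplit'
    -- bounds on the remainders
    have hrem : ∀ (S G : Multiset ℕ), G ≤ S → S.card < P →
        (∀ k ∈ G, ¬ k = m) → (∀ k ∈ S, m ≤ k) →
        0 ≤ (G.map g).sum ∧ (G.map g).sum < g m := by
      intro S G hGS hSP hGm hSm
      constructor
      · apply Multiset.sum_nonneg
        intro x hx
        obtain ⟨k, _, rfl⟩ := Multiset.mem_map.1 hx
        exact le_of_lt (hgpos k)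
      · have hbound : ∀ x ∈ G.map g, x ≤ g (m + 1) := by
          intro x hx
          obtain ⟨k, hk, rfl⟩ := Multiset.mem_map.1 hx
          have hkS : k ∈ S := Multiset.mem_of_le hGS hk
          have : m + 1 ≤ k := lt_of_le_of_ne (hSm k hkS) (fun hh => hGm k hk hh.symm)
          rw [hg]
          simp only [one_div]
          exact inv_anti₀ (by positivity) (pow_le_pow_right₀ (by exact_mod_cast Nat.one_le_of_lt hP) this)
        have h1 := Multiset.sum_le_card_nsmul _ _ hbound
        rw [Multiset.card_map] at h1
        have hcard : G.card < P := lt_of_le_of_lt (Multiset.card_le_card hGS) hSP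
        calc (G.map g).sum ≤ G.card • g (m + 1) := h1
          _ = G.card * g (m + 1) := nsmul_eq_mul _ _
          _ < P * g (m + 1) := by
              apply mul_lt_mul_of_pos_right _ (hgpos (m + 1))
              exact_mod_cast hcard
          _ = g m := by
              rw [hg]; field_simp; ring
    have hFsub : F ≤ T := Multiset.filter_le _ _
    have hF'sub : F' ≤ T' := Multiset.filter_le _ _
    have hGm : ∀ k ∈ F, ¬ k = m := fun k hk => (Multiset.mem_filter.1 hk).2
    have hGm' : ∀ k ∈ F', ¬ k = m := fun k hk => (Multiset.mem_filter.1 hk).2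
    have hSm : ∀ k ∈ T, m ≤ k := fun k hk => hmin k (Multiset.mem_add.2 (Or.inl hk))
    have hSm' : ∀ k ∈ T', m ≤ k := fun k hk => hmin k (Multiset.mem_add.2 (Or.inr hk))
    obtain ⟨hR0, hR1⟩ := hrem T F hFsub hTP hGm hSm
    obtain ⟨hR0', hR1'⟩ := hrem T' F' hF'sub hT'P hGm' hSm'
    -- c = c'
    have hcc : c = c' := by
      rw [hd, hd'] at hsum
      by_contra hne'
      rcases Nat.lt_or_ge c c' with hlt | hge
      · have : (c : ℚ) + 1 ≤ (c' : ℚ) := by exact_mod_cast hlt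
        nlinarith [hgpos m, hR0', hR1]
      · have hlt : c' < c := by omega
        have : (c' : ℚ) + 1 ≤ (c : ℚ) := by exact_mod_cast hlt
        nlinarith [hgpos m, hR0, hR1']
    -- remainders equal
    have hRR : (F.map g).sum = (F'.map g).sum := by
      rw [hd, hd', hcc] at hsum
      linarith
    -- c > 0
    have hcpos : 0 < c := by
      rcases Multiset.mem_add.1 hmmem with hmT | hmT'
      · exact Multiset.count_pos.2 hmT
      · rw [hcc]; exact Multiset.count_pos.2 hmT'
    -- cardinalities
    have hcardF : F.card ≤ n := by
      have : c + F.card = T.card := by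
        rw [← hsplit] at hTn ⊢
        simp [Multiset.card_replicate]
      omega
    have hFF : F = F' := ih F F' hcardF
      (lt_of_le_of_lt (Multiset.card_le_card hFsub) hTP)
      (lt_of_le_of_lt (Multiset.card_le_card hF'sub) hT'P) hRR
    rw [← hsplit, ← hsplit', hcc, hFF]

/-- Separating two multisets via odd/even exponents of a prime: if `ψ₁` maps `W₁`
injectively into the odd naturals, `ψ₂` maps `W₂` injectively into the even naturals,
`P` is a prime with `P > 3N`, and the combined sums `Σ P^{-ψ₁(w)} + Σ P^{-ψ₂(w)}`
over multisets of cardinality less than `N` agree, then the multisets agree pairwise. -/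
theorem odd_even_prime_pow_sum_injective
    {W₁ W₂ : Type*} [Countable W₁] [Countable W₂]
    (ψ₁ : W₁ → ℕ) (hψ₁ : Function.Injective ψ₁) (hodd : ∀ w, Odd (ψ₁ w))
    (ψ₂ : W₂ → ℕ) (hψ₂ : Function.Injective ψ₂) (heven : ∀ w, Even (ψ₂ w))
    (P N : ℕ) (hP : P.Prime) (hPN : P > 3 * N)
    (S₁ S₁' : Multiset W₁) (S₂ S₂' : Multiset W₂)
    (h₁ : S₁.card < N) (h₁' : S₁'.card < N) (h₂ : S₂.card < N) (h₂' : S₂'.card < N)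
    (hsum : (S₁.map (fun w => (1 : ℚ) / (P : ℚ) ^ (ψ₁ w))).sum
          + (S₂.map (fun w => (1 : ℚ) / (P : ℚ) ^ (ψ₂ w))).sum
          = (S₁'.map (fun w => (1 : ℚ) / (P : ℚ) ^ (ψ₁ w))).sum
          + (S₂'.map (fun w => (1 : ℚ) / (P : ℚ) ^ (ψ₂ w))).sum) :
    S₁ = S₁' ∧ S₂ = S₂' := by
  set g : ℕ → ℚ := fun k => (1 : ℚ) / (P : ℚ) ^ k with hg
  set T := S₁.map ψ₁ + S₂.map ψ₂ with hT
  set T' := S₁'.map ψ₁ + S₂'.map ψ₂ with hT'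
  have hcard : T.card < P := by
    rw [hT]; simp only [Multiset.card_add, Multiset.card_map]; omega
  have hcard' : T'.card < P := by
    rw [hT']; simp only [Multiset.card_add, Multiset.card_map]; omega
  have hsumT : (T.map g).sum = (T'.map g).sum := by
    rw [hT, hT']
    simp only [Multiset.map_add, Multiset.sum_add, Multiset.map_map, Function.comp_def]
    exact hsum
  have hTT : T = T' := digit_unique P hP.two_le T.card T T' le_rfl hcard hcard' hsumT
  -- separate odd and even parts
  have hfilt : ∀ (A : Multiset W₁) (B : Multiset W₂),
      (A.map ψ₁ + B.map ψ₂).filter (fun k => Odd k) = A.map ψ₁ ∧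
      (A.map ψ₁ + B.map ψ₂).filter (fun k => ¬ Odd k) = B.map ψ₂ := by
    intro A B
    constructor
    · rw [Multiset.filter_add]
      rw [Multiset.filter_eq_self.2, Multiset.filter_eq_nil.2, add_zero]
      · intro k hk
        obtain ⟨w, _, rfl⟩ := Multiset.mem_map.1 hk
        exact (Nat.not_odd_iff_even.2 (heven w))
      · intro k hk
        obtain ⟨w, _, rfl⟩ := Multiset.mem_map.1 hk
        exact hodd w
    · rw [Multiset.filter_add]
      rw [Multiset.filter_eq_nil.2, Multiset.filter_eq_self.2, zero_add]
      · intro k hk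
        obtain ⟨w, _, rfl⟩ := Multiset.mem_map.1 hk
        exact (Nat.not_odd_iff_even.2 (heven w))
      · intro k hk
        obtain ⟨w, _, rfl⟩ := Multiset.mem_map.1 hk
        simpa using hodd w
  have hmap1 : S₁.map ψ₁ = S₁'.map ψ₁ := by
    have := congrArg (Multiset.filter (fun k => Odd k)) hTT
    rwa [hT, hT', (hfilt S₁ S₂).1, (hfilt S₁' S₂').1] at this
  have hmap2 : S₂.map ψ₂ = S₂'.map ψ₂ := by
    have := congrArg (Multiset.filter (fun k => ¬ Odd k)) hTT
    rwa [hT, hT', (hfilt S₁ S₂).2, (hfilt S₁' S₂').2] at this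
  exact ⟨Multiset.map_injective hψ₁ hmap1, Multiset.map_injective hψ₂ hmap2⟩
end
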